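/- Let P ∈ ℂ(x) be nonzero, let c ∈ ℂ(x) be nonzero, and let α, β, γ, δ ∈ ℂ with αδ − βγ ≠ 0; set m = (αx + β)/(γx + δ) ∈ ℂ(x) and Q = c² · P(m) ∈ ℂ(x) (the result of substituting m for x in P, multiplied by c²). Suppose dj_P, dj_Q ∈ Aut_ℂ(K) fix x and satisfy dj_P(y) = P/y and dj_Q(y) = Q/y. Then dj_P and dj_Q are conjugate in Aut_ℂ(K). (Hence the conjugacy class of the de Jonquières involution dj_P depends only on the PGL(2)-orbit of P up to nonzero square factors, i.e. on the birational class of the hyperelliptic curve y² + P(x) = 0.) -/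

import Mathlib

/-- The field `K = ℂ(x, y)` of rational functions in two variables over `ℂ`, realized as the
fraction field of the polynomial ring `ℂ[x, y]`. Its group of `ℂ`-algebra automorphisms
`K ≃ₐ[ℂ] K` is the plane Cremona group `Cr(2)`. -/
noncomputable abbrev PlaneFunctionField : Type :=
  FractionRing (MvPolynomial (Fin 2) ℂ)

/-- The element `x` of `K = ℂ(x, y)`. -/
noncomputable def Xf : PlaneFunctionField :=
  algebraMap (MvPolynomial (Fin 2) ℂ) PlaneFunctionField (MvPolynomial.X 0)

/-- The element `y` of `K = ℂ(x, y)`. -/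
noncomputable def Yf : PlaneFunctionField :=
  algebraMap (MvPolynomial (Fin 2) ℂ) PlaneFunctionField (MvPolynomial.X 1)

/-- The image of a complex constant in `K = ℂ(x, y)`. -/
noncomputable def Cf (c : ℂ) : PlaneFunctionField :=
  algebraMap ℂ PlaneFunctionField c

/-- The subfield `ℂ(x)` of `K = ℂ(x, y)`. -/
noncomputable def Cx : IntermediateField ℂ PlaneFunctionField :=
  IntermediateField.adjoin ℂ {Xf}

open MvPolynomial

set_option synthInstance.maxHeartbeats 1000000
set_option maxHeartbeats 1600000

local notation "K" => PlaneFunctionField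
local notation "R2" => MvPolynomial (Fin 2) ℂ

lemma DJ.hAI : AlgebraicIndependent ℂ ![Xf, Yf] := by
  have h := (MvPolynomial.algebraicIndependent_X (Fin 2) ℂ).map'
    (f := IsScalarTower.toAlgHom ℂ R2 K)
    (IsFractionRing.injective _ _)
  convert h using 1
  funext i; fin_cases i <;> rfl

lemma DJ.Xf_mem_Cx : Xf ∈ Cx := IntermediateField.subset_adjoin ℂ {Xf} rfl

lemma DJ.maps_Cx (f : K →ₐ[ℂ] K) (hfx : f Xf ∈ Cx) {z : K} (hz : z ∈ Cx) : f z ∈ Cx := by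
  induction hz using IntermediateField.adjoin_induction with
  | mem x hx => rw [Set.mem_singleton_iff] at hx; subst hx; exact hfx
  | algebraMap x => rw [f.commutes]; exact Cx.algebraMap_mem x
  | add x y _ _ hx hy => rw [map_add]; exact add_mem hx hy
  | inv x _ hx => rw [map_inv₀]; exact inv_mem hx
  | mul x y _ _ hx hy => rw [map_mul]; exact mul_mem hx hy

lemma DJ.fix_Cx (f : K →ₐ[ℂ] K) (hfx : f Xf = Xf) {z : K} (hz : z ∈ Cx) : f z = z := by
  induction hz using IntermediateField.adjoin_induction with
  | mem x hx => rw [Set.mem_singleton_iff] at hx; subst hx; exact hfx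
  | algebraMap x => exact f.commutes x
  | add x y _ _ hx hy => rw [map_add, hx, hy]
  | inv x _ hx => rw [map_inv₀, hx]
  | mul x y _ _ hx hy => rw [map_mul, hx, hy]

noncomputable def DJ.A0 : Subalgebra ℂ K := Algebra.adjoin ℂ (Set.range (fun _ : Unit => Xf))

lemma DJ.h1 : AlgebraicIndependent ℂ (fun _ : Unit => Xf) := by
  have := DJ.hAI.comp (fun _ : Unit => (0 : Fin 2)) (fun a b _ => rfl)
  convert this using 1
  funext _; rfl

lemma DJ.transc_Yf : Transcendental DJ.A0 Yf := by
  have h2 : AlgebraicIndependent ℂ (fun o : Option Unit => o.elim Yf (fun _ => Xf)) := by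
    have := DJ.hAI.comp (fun o : Option Unit => o.elim 1 (fun _ => 0))
      (by rintro (_|_) (_|_) h <;> simp_all)
    convert this using 1
    funext o; rcases o with _ | _ <;> rfl
  exact (DJ.h1.option_iff_transcendental Yf).1 h2

lemma DJ.transc_smul {z : K} (hz : Transcendental DJ.A0 z) {a : DJ.A0} (ha : a ≠ 0) :
    Transcendental DJ.A0 ((a : K) * z) := by
  intro halg
  apply hz
  obtain ⟨p, hp0, hpz⟩ := halg
  refine ⟨p.comp (Polynomial.C a * Polynomial.X), ?_, ?_⟩
  · intro h
    rw [Polynomial.comp_eq_zero_iff] at h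
    rcases h with h | ⟨-, h⟩
    · exact hp0 h
    · apply ha
      have := congrArg (Polynomial.coeff · 1) h
      simpa using this
  · rw [Polynomial.aeval_comp]
    have : (Polynomial.aeval z) (Polynomial.C a * Polynomial.X) = (a : K) * z := by
      simp only [map_mul, Polynomial.aeval_X, Polynomial.aeval_C]
      rfl
    rw [this]
    exact hpz

lemma DJ.transc_div_mul {fv gv : DJ.A0} (hf : fv ≠ 0) (hg : gv ≠ 0) :
    Transcendental DJ.A0 (((fv : K) / (gv : K)) * Yf) := by
  intro halg
  obtain ⟨p, hp0, hpz⟩ := halg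
  have hgK : (gv : K) ≠ 0 := by
    simpa using hg
  have key : Polynomial.eval₂ (algebraMap DJ.A0 K)
      ((algebraMap DJ.A0 K gv) * (((fv : K) / (gv : K)) * Yf)) (p.scaleRoots gv) = 0 := by
    apply Polynomial.scaleRoots_eval₂_eq_zero
    rw [← Polynomial.aeval_def]
    exact hpz
  have harg : (algebraMap DJ.A0 K gv) * (((fv : K) / (gv : K)) * Yf) = (fv : K) * Yf := by
    show (gv : K) * _ = _
    field_simp
  rw [harg, ← Polynomial.aeval_def] at key
  exact DJ.transc_smul DJ.transc_Yf hf ⟨p.scaleRoots gv, Polynomial.scaleRoots_ne_zero hp0 _, key⟩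

lemma DJ.transc_u {u : K} (hu : u ∈ Cx) (hu0 : u ≠ 0) : Transcendental DJ.A0 (u * Yf) := by
  obtain ⟨F, G, hFG⟩ := (IntermediateField.mem_adjoin_simple_iff ℂ u).1 hu
  set fK := Polynomial.aeval Xf F with hfK
  set gK := Polynomial.aeval Xf G with hgK
  have hgK0 : gK ≠ 0 := by
    intro h
    rw [h, div_zero] at hFG
    exact hu0 hFG
  have hfK0 : fK ≠ 0 := by
    intro h
    rw [h, zero_div] at hFG
    exact hu0 hFG
  have hfmem : fK ∈ DJ.A0 := by
    rw [DJ.A0, Set.range_const]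
    exact Polynomial.aeval_mem_adjoin_singleton ℂ Xf
  have hgmem : gK ∈ DJ.A0 := by
    rw [DJ.A0, Set.range_const]
    exact Polynomial.aeval_mem_adjoin_singleton ℂ Xf
  have := DJ.transc_div_mul (fv := ⟨fK, hfmem⟩) (gv := ⟨gK, hgmem⟩)
    (fun h => hfK0 (congrArg Subtype.val h)) (fun h => hgK0 (congrArg Subtype.val h))
  rwa [show ((⟨fK, hfmem⟩ : DJ.A0) : K) / ((⟨gK, hgmem⟩ : DJ.A0) : K) = u from by
    rw [hFG]] at this

lemma DJ.hAI' {u : K} (hu : u ∈ Cx) (hu0 : u ≠ 0) : AlgebraicIndependent ℂ ![Xf, u * Yf] := by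
  have h2 : AlgebraicIndependent ℂ (fun o : Option Unit => o.elim (u * Yf) (fun _ => Xf)) :=
    (DJ.h1.option_iff_transcendental (u * Yf)).2 (DJ.transc_u hu hu0)
  have := h2.comp (fun i : Fin 2 => if i = 0 then some () else none)
    (by decide)
  convert this using 1
  funext i; fin_cases i <;> rfl

lemma DJ.adjoin_eq_top {E : IntermediateField ℂ K} (hx : Xf ∈ E) (hy : Yf ∈ E) : E = ⊤ := by
  rw [eq_top_iff]
  intro z _
  obtain ⟨p, q, hq, rfl⟩ := IsFractionRing.div_surjective (A := R2) z
  have hmem : ∀ r : R2, algebraMap R2 K r ∈ E := by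
    intro r
    induction r using MvPolynomial.induction_on with
    | C a =>
      rw [show (C a : R2) = algebraMap ℂ R2 a from rfl,
        ← IsScalarTower.algebraMap_apply ℂ R2 K a]
      exact E.algebraMap_mem a
    | add p q hp hq => rw [map_add]; exact add_mem hp hq
    | mul_X p i hp =>
      rw [map_mul]
      refine mul_mem hp ?_
      fin_cases i
      · exact hx
      · exact hy
  exact div_mem (hmem p) (hmem q)

noncomputable def DJ.fullEquiv (w : Fin 2 → K) (h : AlgebraicIndependent ℂ w)
    (htop : IntermediateField.adjoin ℂ (Set.range w) = ⊤) : K ≃ₐ[ℂ] K :=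
  (h.aevalEquivField.trans (IntermediateField.equivOfEq htop)).trans IntermediateField.topEquiv

lemma DJ.fullEquiv_algebraMap (w : Fin 2 → K) (h : AlgebraicIndependent ℂ w)
    (htop : IntermediateField.adjoin ℂ (Set.range w) = ⊤) (p : R2) :
    DJ.fullEquiv w h htop (algebraMap R2 K p) = aeval w p := by
  have := h.aevalEquivField_algebraMap_apply_coe p
  simp only [DJ.fullEquiv, AlgEquiv.trans_apply]
  rw [← this]
  rfl

lemma DJ.exists_rho {u : K} (hu : u ∈ Cx) (hu0 : u ≠ 0) :
    ∃ ρ : K ≃ₐ[ℂ] K, ρ Xf = Xf ∧ ρ Yf = u * Yf := by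
  have hXA : Xf ∈ Set.range ![Xf, Yf] := ⟨0, rfl⟩
  have hYA : Yf ∈ Set.range ![Xf, Yf] := ⟨1, rfl⟩
  have hXB : Xf ∈ Set.range ![Xf, u * Yf] := ⟨0, rfl⟩
  have hUB : u * Yf ∈ Set.range ![Xf, u * Yf] := ⟨1, rfl⟩
  have htopA : IntermediateField.adjoin ℂ (Set.range ![Xf, Yf]) = ⊤ :=
    DJ.adjoin_eq_top (IntermediateField.subset_adjoin _ _ hXA)
      (IntermediateField.subset_adjoin _ _ hYA)
  have htopB : IntermediateField.adjoin ℂ (Set.range ![Xf, u * Yf]) = ⊤ := by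
    apply DJ.adjoin_eq_top (IntermediateField.subset_adjoin _ _ hXB)
    have hCx : Cx ≤ IntermediateField.adjoin ℂ (Set.range ![Xf, u * Yf]) := by
      rw [Cx, IntermediateField.adjoin_simple_le_iff]
      exact IntermediateField.subset_adjoin _ _ hXB
    have hu' : u ∈ IntermediateField.adjoin ℂ (Set.range ![Xf, u * Yf]) := hCx hu
    have hmem : u⁻¹ * (u * Yf) ∈ IntermediateField.adjoin ℂ (Set.range ![Xf, u * Yf]) :=
      mul_mem (inv_mem hu') (IntermediateField.subset_adjoin _ _ hUB)
    rwa [inv_mul_cancel_left₀ hu0] at hmem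
  set fullA := DJ.fullEquiv ![Xf, Yf] DJ.hAI htopA
  set fullB := DJ.fullEquiv ![Xf, u * Yf] (DJ.hAI' hu hu0) htopB
  refine ⟨fullA.symm.trans fullB, ?_, ?_⟩
  · have hA : fullA (algebraMap R2 K (X 0)) = Xf := by
      rw [DJ.fullEquiv_algebraMap]; simp
    have hsymm : fullA.symm Xf = algebraMap R2 K (X 0) := by
      rw [← hA, AlgEquiv.symm_apply_apply]
    rw [AlgEquiv.trans_apply, hsymm, DJ.fullEquiv_algebraMap]
    simp
  · have hA : fullA (algebraMap R2 K (X 1)) = Yf := by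
      rw [DJ.fullEquiv_algebraMap]; simp
    have hsymm : fullA.symm Yf = algebraMap R2 K (X 1) := by
      rw [← hA, AlgEquiv.symm_apply_apply]
    rw [AlgEquiv.trans_apply, hsymm, DJ.fullEquiv_algebraMap]
    simp

lemma DJ.algEquiv_ext {f g : K ≃ₐ[ℂ] K} (hx : f Xf = g Xf) (hy : f Yf = g Yf) : f = g := by
  have key : ∀ p : R2, f (algebraMap R2 K p) = g (algebraMap R2 K p) := by
    have : (f.toAlgHom.comp (IsScalarTower.toAlgHom ℂ R2 K)) =
        (g.toAlgHom.comp (IsScalarTower.toAlgHom ℂ R2 K)) := by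
      apply MvPolynomial.algHom_ext
      intro i
      fin_cases i
      · simpa [Xf] using hx
      · simpa [Yf] using hy
    intro p
    exact DFunLike.congr_fun this p
  apply AlgEquiv.ext
  intro z
  obtain ⟨p, q, hq, rfl⟩ := IsFractionRing.div_surjective (A := R2) z
  rw [map_div₀, map_div₀, key, key]

/-- Let `P ∈ ℂ(x)` be nonzero, `c ∈ ℂ(x)` nonzero, and `m = (αx + β)/(γx + δ)` a Möbius
transformation (`αδ − βγ ≠ 0`); set `Q = c²·P(m)`, where the substitution `x ↦ m` is
realized by the automorphism `μ : x ↦ m, y ↦ y` of `K`. Then the de Jonquières involutions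
`dj_P : y ↦ P/y` and `dj_Q : y ↦ Q/y` are conjugate in the Cremona group: the conjugacy
class of `dj_P` depends only on the `PGL(2)`-orbit of `P` up to nonzero square factors,
i.e. on the birational class of the hyperelliptic curve `y² + P(x) = 0`. -/
theorem deJonquieres_conjugacy_moebius_and_square
    (P c : PlaneFunctionField) (hP : P ∈ Cx) (hP0 : P ≠ 0)
    (hc : c ∈ Cx) (hc0 : c ≠ 0)
    (α β γ δ : ℂ) (hdet : α * δ - β * γ ≠ 0)
    (μ : PlaneFunctionField ≃ₐ[ℂ] PlaneFunctionField)
    (hμx : μ Xf = (Cf α * Xf + Cf β) / (Cf γ * Xf + Cf δ))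
    (hμy : μ Yf = Yf)
    (djP djQ : PlaneFunctionField ≃ₐ[ℂ] PlaneFunctionField)
    (hdjPx : djP Xf = Xf) (hdjQx : djQ Xf = Xf)
    (hdjPy : djP Yf = P / Yf)
    (hdjQy : djQ Yf = (c ^ 2 * μ P) / Yf) :
    ∃ σ : PlaneFunctionField ≃ₐ[ℂ] PlaneFunctionField, σ * djP * σ⁻¹ = djQ := by
  obtain ⟨ρ, hρx, hρy⟩ := DJ.exists_rho (u := c⁻¹) (inv_mem hc) (inv_ne_zero hc0)
  have hY0 : Yf ≠ 0 :=
    (map_ne_zero_iff _ (IsFractionRing.injective R2 K)).2 (MvPolynomial.X_ne_zero 1)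
  have hμX_mem : μ Xf ∈ Cx := by
    rw [hμx]
    exact div_mem
      (add_mem (mul_mem (Cx.algebraMap_mem α) DJ.Xf_mem_Cx) (Cx.algebraMap_mem β))
      (add_mem (mul_mem (Cx.algebraMap_mem γ) DJ.Xf_mem_Cx) (Cx.algebraMap_mem δ))
  have hμP_mem : μ P ∈ Cx := DJ.maps_Cx (μ : K →ₐ[ℂ] K) hμX_mem hP
  have hρ_fix : ∀ z ∈ Cx, ρ z = z := fun z hz => DJ.fix_Cx (ρ : K →ₐ[ℂ] K) hρx hz
  have hdjQ_fix : ∀ z ∈ Cx, djQ z = z := fun z hz => DJ.fix_Cx (djQ : K →ₐ[ℂ] K) hdjQx hz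
  refine ⟨μ.trans ρ, ?_⟩
  rw [mul_inv_eq_iff_eq_mul]
  apply DJ.algEquiv_ext
  · show (μ.trans ρ) (djP Xf) = djQ ((μ.trans ρ) Xf)
    rw [hdjPx, AlgEquiv.trans_apply, hρ_fix _ hμX_mem, hdjQ_fix _ hμX_mem]
  · show (μ.trans ρ) (djP Yf) = djQ ((μ.trans ρ) Yf)
    rw [hdjPy, AlgEquiv.trans_apply, map_div₀, hμy, map_div₀, hρ_fix _ hμP_mem, hρy,
      AlgEquiv.trans_apply, hμy, hρy, map_mul, hdjQy,
      hdjQ_fix _ (inv_mem hc)]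
    field_simp
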